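/- Let p₁, p₂, p₃, p₄ ∈ ℍ^{n+1} be nonzero vectors with ⟨pᵢ,pᵢ⟩ ≤ 0, pairwise non-proportional, let λ₁, λ₂, λ₃, λ₄ ∈ ℍ be nonzero, and let g ∈ Sp(n,1). Then Re 𝕏(p₁λ₁,p₂λ₂,p₃λ₃,p₄λ₄) = Re 𝕏(p₁,p₂,p₃,p₄) = Re 𝕏(g p₁, g p₂, g p₃, g p₄) and |𝕏(p₁λ₁,p₂λ₂,p₃λ₃,p₄λ₄)| = |𝕏(p₁,p₂,p₃,p₄)| = |𝕏(g p₁, g p₂, g p₃, g p₄)|. -/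
import Mathlib


open scoped Quaternion

noncomputable section

/-- The quaternionic Hermitian form of signature (n,1) on ℍ^{n+1}:
`⟨z,w⟩ = w̄₁ z_{n+1} + Σ_{i=2}^n w̄ᵢ zᵢ + w̄_{n+1} z₁`. -/
noncomputable def herm {n : ℕ} (z w : Fin (n+1) → ℍ[ℝ]) : ℍ[ℝ] :=
  star (w 0) * z (Fin.last n)
    + ∑ i ∈ Finset.Ioo (0 : Fin (n+1)) (Fin.last n), star (w i) * z i
    + star (w (Fin.last n)) * z 0

/-- `w` is (right-)proportional to `z`: `w = zλ` for some `λ ∈ ℍ`. -/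
def Prp {n : ℕ} (z w : Fin (n+1) → ℍ[ℝ]) : Prop :=
  ∃ lam : ℍ[ℝ], w = fun i => z i * lam

/-- Right scalar multiplication on ℍ^{n+1}. -/
noncomputable def smulR {n : ℕ} (z : Fin (n+1) → ℍ[ℝ]) (lam : ℍ[ℝ]) :
    Fin (n+1) → ℍ[ℝ] := fun i => z i * lam

/-- The quaternionic triple product `⟨p₁,p₂,p₃⟩ = ⟨p₂,p₁⟩⟨p₃,p₂⟩⟨p₁,p₃⟩`. -/
noncomputable def tri {n : ℕ} (p₁ p₂ p₃ : Fin (n+1) → ℍ[ℝ]) : ℍ[ℝ] :=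
  herm p₂ p₁ * herm p₃ p₂ * herm p₁ p₃

/-- The quaternionic Cartan angular invariant
`𝔸(p₁,p₂,p₃) = arccos(Re(−⟨p₁,p₂,p₃⟩)/|⟨p₁,p₂,p₃⟩|)`. -/
noncomputable def cartan {n : ℕ} (p₁ p₂ p₃ : Fin (n+1) → ℍ[ℝ]) : ℝ :=
  Real.arccos ((-(tri p₁ p₂ p₃)).re / ‖tri p₁ p₂ p₃‖)

/-- The quaternionic cross-ratio `𝕏(p₁,p₂,p₃,p₄) = ⟨p₃,p₁⟩⟨p₃,p₂⟩⁻¹⟨p₄,p₂⟩⟨p₄,p₁⟩⁻¹`. -/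
noncomputable def crossX {n : ℕ} (p₁ p₂ p₃ p₄ : Fin (n+1) → ℍ[ℝ]) : ℍ[ℝ] :=
  herm p₃ p₁ * (herm p₃ p₂)⁻¹ * herm p₄ p₂ * (herm p₄ p₁)⁻¹

/-- The group Sp(n,1) of quaternionic matrices preserving the Hermitian form. -/
def SpGrp (n : ℕ) : Set (Matrix (Fin (n+1)) (Fin (n+1)) ℍ[ℝ]) :=
  {g | ∀ z w : Fin (n+1) → ℍ[ℝ], herm (g.mulVec z) (g.mulVec w) = herm z w}

/-- Similarity of quaternions: `b = μ a μ⁻¹` for some nonzero `μ`. -/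
def QSim (a b : ℍ[ℝ]) : Prop := ∃ mu : ℍ[ℝ], mu ≠ 0 ∧ b = mu * a * mu⁻¹

/-- the real part and modulus of the quaternionic cross-ratio are invariant under
right rescaling of the points and under the action of `Sp(n,1)`. -/
lemma herm_smulR {n : ℕ} (z w : Fin (n+1) → ℍ[ℝ]) (a b : ℍ[ℝ]) :
    herm (smulR z a) (smulR w b) = star b * herm z w * a := by
  simp [herm, smulR, star_mul, Finset.mul_sum, Finset.sum_mul, mul_add, add_mul, mul_assoc]

lemma crossX_smulR {n : ℕ} (p₁ p₂ p₃ p₄ : Fin (n+1) → ℍ[ℝ])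
    (l₁ l₂ l₃ l₄ : ℍ[ℝ]) (hl1 : l₁ ≠ 0) (hl2 : l₂ ≠ 0) (hl3 : l₃ ≠ 0) (hl4 : l₄ ≠ 0) :
    crossX (smulR p₁ l₁) (smulR p₂ l₂) (smulR p₃ l₃) (smulR p₄ l₄)
      = star l₁ * crossX p₁ p₂ p₃ p₄ * (star l₁)⁻¹ := by
  have s2 : (star l₂ : ℍ[ℝ]) ≠ 0 := star_ne_zero.2 hl2
  unfold crossX
  rw [herm_smulR, herm_smulR, herm_smulR, herm_smulR, mul_inv_rev, mul_inv_rev,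
    mul_inv_rev, mul_inv_rev]
  simp [mul_assoc, mul_inv_cancel_left₀, inv_mul_cancel_left₀, hl3, hl4, s2]

lemma re_mul_comm (a b : ℍ[ℝ]) : (a * b).re = (b * a).re := by
  simp [Quaternion.re_mul]; ring

theorem stmt4 {n : ℕ} (hn : 2 ≤ n) (p₁ p₂ p₃ p₄ : Fin (n+1) → ℍ[ℝ])
    (h1 : p₁ ≠ 0) (h2 : p₂ ≠ 0) (h3 : p₃ ≠ 0) (h4 : p₄ ≠ 0)
    (hg1 : (herm p₁ p₁).re ≤ 0) (hg2 : (herm p₂ p₂).re ≤ 0)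
    (hg3 : (herm p₃ p₃).re ≤ 0) (hg4 : (herm p₄ p₄).re ≤ 0)
    (h12 : ¬ Prp p₁ p₂) (h13 : ¬ Prp p₁ p₃) (h14 : ¬ Prp p₁ p₄)
    (h23 : ¬ Prp p₂ p₃) (h24 : ¬ Prp p₂ p₄) (h34 : ¬ Prp p₃ p₄)
    (l₁ l₂ l₃ l₄ : ℍ[ℝ])
    (hl1 : l₁ ≠ 0) (hl2 : l₂ ≠ 0) (hl3 : l₃ ≠ 0) (hl4 : l₄ ≠ 0)
    (g : Matrix (Fin (n+1)) (Fin (n+1)) ℍ[ℝ]) (hg : g ∈ SpGrp n) :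
    ((crossX (smulR p₁ l₁) (smulR p₂ l₂) (smulR p₃ l₃) (smulR p₄ l₄)).re
        = (crossX p₁ p₂ p₃ p₄).re
      ∧ (crossX p₁ p₂ p₃ p₄).re
        = (crossX (g.mulVec p₁) (g.mulVec p₂) (g.mulVec p₃) (g.mulVec p₄)).re)
    ∧ (‖crossX (smulR p₁ l₁) (smulR p₂ l₂) (smulR p₃ l₃) (smulR p₄ l₄)‖
        = ‖crossX p₁ p₂ p₃ p₄‖
      ∧ ‖crossX p₁ p₂ p₃ p₄‖
        = ‖crossX (g.mulVec p₁) (g.mulVec p₂) (g.mulVec p₃) (g.mulVec p₄)‖) := by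
  have hq : crossX (smulR p₁ l₁) (smulR p₂ l₂) (smulR p₃ l₃) (smulR p₄ l₄)
      = star l₁ * crossX p₁ p₂ p₃ p₄ * (star l₁)⁻¹ :=
    crossX_smulR p₁ p₂ p₃ p₄ l₁ l₂ l₃ l₄ hl1 hl2 hl3 hl4
  have s1 : (star l₁ : ℍ[ℝ]) ≠ 0 := star_ne_zero.2 hl1
  have hgX : crossX (g.mulVec p₁) (g.mulVec p₂) (g.mulVec p₃) (g.mulVec p₄)
      = crossX p₁ p₂ p₃ p₄ := by
    unfold crossX; rw [hg, hg, hg, hg]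
  refine ⟨⟨?_, by rw [hgX]⟩, ⟨?_, by rw [hgX]⟩⟩
  · rw [hq, re_mul_comm, ← mul_assoc, inv_mul_cancel₀ s1, one_mul]
  · rw [hq, norm_mul, norm_mul, norm_inv, mul_comm ‖star l₁‖,
      mul_assoc, mul_inv_cancel₀ (norm_ne_zero_iff.2 s1), mul_one]
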